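/- Every finite word w contains at most |w| + 1 distinct palindromic factors, where the empty word counts as a palindromic factor. -/

import Mathlib

open List

/-- The factor of `u` of length `n` starting at position `i`. -/
def word {A : Type*} (u : ℕ → A) (i n : ℕ) : List A :=
  (List.range n).map (fun j => u (i + j))

/-- `w` occurs in `u` at position `i`. -/
def OccursAt {A : Type*} (u : ℕ → A) (w : List A) (i : ℕ) : Prop :=
  w = word u i w.length

/-- `w` is a factor of the infinite word `u`. -/
def IsFactor {A : Type*} (u : ℕ → A) (w : List A) : Prop :=
  ∃ i, OccursAt u w i

/-- Every letter of the alphabet occurs in `u`. -/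
def AllLettersOccur {A : Type*} (u : ℕ → A) : Prop :=
  ∀ a : A, ∃ i, u i = a

/-- The language of `u` is closed under reversal. -/
def ClosedUnderReversal {A : Type*} (u : ℕ → A) : Prop :=
  ∀ w : List A, IsFactor u w → IsFactor u w.reverse

/-- `u` is uniformly recurrent: every factor occurs in every window of some
bounded length. -/
def UniformlyRecurrent {A : Type*} (u : ℕ → A) : Prop :=
  ∀ w : List A, IsFactor u w → ∃ N : ℕ, ∀ i : ℕ, ∃ j : ℕ,
    i ≤ j ∧ j < i + N ∧ OccursAt u w j

/-- Factor complexity: the number of factors of `u` of length `n`. -/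
noncomputable def complexity {A : Type*} (u : ℕ → A) (n : ℕ) : ℕ :=
  Set.ncard {w : List A | w.length = n ∧ IsFactor u w}

/-- Palindromic complexity: the number of palindromic factors of `u` of
length `n`. -/
noncomputable def palComplexity {A : Type*} (u : ℕ → A) (n : ℕ) : ℕ :=
  Set.ncard {w : List A | w.length = n ∧ IsFactor u w ∧ w.reverse = w}

/-- The number of distinct palindromic factors of a finite word
(the empty word included). -/
noncomputable def palCount {A : Type*} (w : List A) : ℕ :=
  Set.ncard {v : List A | v <:+: w ∧ v.reverse = v}

/-- `u` is rich in palindromes. -/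
def Rich {A : Type*} (u : ℕ → A) : Prop :=
  ∀ w : List A, IsFactor u w → palCount w = w.length + 1

/-- `j < k` are two successive occurrences of `w` in `u`. -/
def SuccOccurrences {A : Type*} (u : ℕ → A) (w : List A) (j k : ℕ) : Prop :=
  OccursAt u w j ∧ OccursAt u w k ∧ j < k ∧
    ∀ l : ℕ, j < l → l < k → ¬ OccursAt u w l

/-- The set of return words of the factor `w` in `u`. -/
def returnWords {A : Type*} (u : ℕ → A) (w : List A) : Set (List A) :=
  {v | ∃ j k : ℕ, SuccOccurrences u w j k ∧ v = word u j (k - j)}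

/-- Left extensions of `w` in `u`. -/
def Lext {A : Type*} (u : ℕ → A) (w : List A) : Set A :=
  {a | IsFactor u (a :: w)}

/-- Right extensions of `w` in `u`. -/
def Rext {A : Type*} (u : ℕ → A) (w : List A) : Set A :=
  {b | IsFactor u (w ++ [b])}

/-- Bilateral extensions of `w` in `u`. -/
def Bext {A : Type*} (u : ℕ → A) (w : List A) : Set (A × A) :=
  {p | IsFactor u (p.1 :: (w ++ [p.2]))}

/-- Palindromic extensions of a (palindromic) factor `w` of `u`. -/
def Pext {A : Type*} (u : ℕ → A) (w : List A) : Set (List A) :=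
  {v | ∃ a : A, v = a :: (w ++ [a]) ∧ IsFactor u v}

/-- `w` is a bispecial factor of `u`. -/
def Bispecial {A : Type*} (u : ℕ → A) (w : List A) : Prop :=
  IsFactor u w ∧ 2 ≤ Set.ncard (Lext u w) ∧ 2 ≤ Set.ncard (Rext u w)

/-- The bilateral order of a factor `w` of `u`. -/
noncomputable def bilateralOrder {A : Type*} (u : ℕ → A) (w : List A) : ℤ :=
  (Set.ncard (Bext u w) : ℤ) - Set.ncard (Rext u w) - Set.ncard (Lext u w) + 1

/-- `u` is eventually periodic. -/
def EventuallyPeriodic {A : Type*} (u : ℕ → A) : Prop :=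
  ∃ p : ℕ, 0 < p ∧ ∃ N : ℕ, ∀ n : ℕ, N ≤ n → u (n + p) = u n

/-- `u` is aperiodic. -/
def Aperiodic {A : Type*} (u : ℕ → A) : Prop :=
  ¬ EventuallyPeriodic u

/-- `u` is (1-)balanced. -/
def IsBalanced {A : Type*} [DecidableEq A] (u : ℕ → A) : Prop :=
  ∀ a : A, ∀ w v : List A, IsFactor u w → IsFactor u v → w.length = v.length →
    |(w.count a : ℤ) - (v.count a : ℤ)| ≤ 1

/-- Every finite word `w` contains at most `|w| + 1` distinct
palindromic factors (the empty word included). -/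
lemma palSet_finite {A : Type*} (w : List A) :
    {v : List A | v <:+: w ∧ v.reverse = v}.Finite := by
  apply (w.sublists'.finite_toSet).subset
  rintro v ⟨hv, -⟩
  simpa [List.mem_sublists'] using hv.sublist

lemma infix_concat_cases {A : Type*} {v w : List A} {a : A}
    (h : v <:+: w ++ [a]) : v <:+: w ∨ v <:+ (w ++ [a]) := by
  obtain ⟨s, t, hst⟩ := h
  rcases t.eq_nil_or_concat with rfl | ⟨t', b, rfl⟩
  · right; exact ⟨s, by simpa using hst⟩
  · left
    have hst' : (s ++ v ++ t') ++ [b] = w ++ [a] := by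
      rw [← hst]; simp
    obtain ⟨h1, -⟩ := List.append_inj' hst' (by simp)
    exact ⟨s, t', h1⟩

theorem stmt2 {A : Type*} (w : List A) :
    palCount w ≤ w.length + 1 := by
  induction w using List.reverseRecOn with
  | nil =>
      have h0 : {v : List A | v <:+: ([] : List A) ∧ v.reverse = v} = {[]} := by
        ext v
        constructor
        · rintro ⟨hv, -⟩; simpa using List.infix_nil.mp hv
        · rintro rfl; exact ⟨by simp, rfl⟩
      rw [palCount, h0, Set.ncard_singleton]
      simp
  | append_singleton w a ih =>
      -- set of palindromic suffixes of w ++ [a]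
      set T : Set (List A) := {v | v <:+ (w ++ [a]) ∧ v.reverse = v} with hT
      have hTfin : T.Finite := by
        apply (palSet_finite (w ++ [a])).subset
        rintro v ⟨hv, hp⟩; exact ⟨hv.isInfix, hp⟩
      have hTne : T.Nonempty := ⟨[a], ⟨⟨w, rfl⟩, rfl⟩⟩
      obtain ⟨L, hLT, hLmax⟩ := Set.Finite.exists_maximalFor List.length T hTfin hTne
      have hmax : ∀ v ∈ T, v.length ≤ L.length := by
        intro v hv
        rcases le_total v.length L.length with h | h
        · exact h
        · exact hLmax hv h
      have hsub : {v : List A | v <:+: (w ++ [a]) ∧ v.reverse = v} ⊆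
          insert L {v : List A | v <:+: w ∧ v.reverse = v} := by
        rintro v ⟨hv, hp⟩
        rcases infix_concat_cases hv with hvw | hvs
        · exact Set.mem_insert_of_mem _ ⟨hvw, hp⟩
        · have hvT : v ∈ T := ⟨hvs, hp⟩
          by_cases hveq : v = L
          · exact hveq ▸ Set.mem_insert _ _
          · -- v is a proper palindromic suffix of w++[a], so suffix of L,
            -- hence prefix of L, hence occurs inside w.
            have hvL : v <:+ L := List.suffix_of_suffix_length_le hvs hLT.1
              (hmax v hvT)
            have hvLp : v <+: L := by
              have h2 := hvL
              rw [← hp, ← hLT.2] at h2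
              exact List.reverse_suffix.mp h2
            obtain ⟨r, hr⟩ := hvLp
            have hrne : r ≠ [] := by
              rintro rfl; exact hveq (by simpa using hr)
            obtain ⟨p, hpL⟩ := hLT.1
            rcases r.eq_nil_or_concat with rfl | ⟨r', b, rfl⟩
            · exact absurd rfl hrne
            · apply Set.mem_insert_of_mem
              refine ⟨⟨p, r', ?_⟩, hp⟩
              have hpL' : (p ++ v ++ r') ++ [b] = w ++ [a] := by
                rw [← hpL, ← hr]; simp
              obtain ⟨h1, -⟩ := List.append_inj' hpL' (by simp)
              exact h1
      calc palCount (w ++ [a])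
          ≤ (insert L {v : List A | v <:+: w ∧ v.reverse = v}).ncard :=
            Set.ncard_le_ncard hsub ((palSet_finite w).insert L)
        _ ≤ {v : List A | v <:+: w ∧ v.reverse = v}.ncard + 1 :=
            Set.ncard_insert_le _ _
        _ = palCount w + 1 := rfl
        _ ≤ (w.length + 1) + 1 := by omega
        _ = (w ++ [a]).length + 1 := by simp
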